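/- With J, S, a as above, the induction step of the triangular-part identity holds: (J^{n+1})_+ = (Jⁿ)_+ J + (Jⁿ)_d J_+ - (J_+ Jⁿ)_d, where J_+ = aS. -/

import Mathlib

noncomputable section

/-- ℓ²(ℤ) -/
abbrev H2 : Type := lp (fun _ : ℤ => ℂ) 2

/-- the standard unit vectors δ_n -/
noncomputable def delta (n : ℤ) : H2 := lp.single 2 n 1

/-- matrix entries X_{jk} = ⟨δ_j, X δ_k⟩ -/
noncomputable def ent (X : H2 →L[ℂ] H2) (j k : ℤ) : ℂ := inner ℂ (delta j) (X (delta k))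

open ContinuousLinearMap

lemma ent_eq_coord (X : H2 →L[ℂ] H2) (j k : ℤ) : ent X j k = X (delta k) j := by
  rw [ent, delta, lp.inner_single_left]
  simp

lemma ext_of_ent {X Y : H2 →L[ℂ] H2} (h : ∀ j k, ent X j k = ent Y j k) : X = Y := by
  have hd : ∀ k, X (delta k) = Y (delta k) := by
    intro k
    apply lp.ext
    funext j
    rw [← ent_eq_coord, ← ent_eq_coord, h]
  refine ContinuousLinearMap.ext fun f => ?_
  have hf : HasSum (fun i : ℤ => lp.single 2 i (f i)) f :=
    lp.hasSum_single ENNReal.ofNat_ne_top f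
  have hs : ∀ i : ℤ, lp.single (E := fun _ : ℤ => ℂ) 2 i (f i) = f i • delta i := by
    intro i
    have := lp.single_smul (E := fun _ : ℤ => ℂ) 2 i (f i) (1 : ℂ)
    rw [delta, ← this]
    norm_num
  have hX : HasSum (fun i : ℤ => f i • X (delta i)) (X f) := by
    have := hf.mapL X
    simpa [hs] using this
  have hY : HasSum (fun i : ℤ => f i • X (delta i)) (Y f) := by
    have := hf.mapL Y
    simpa [hs, hd] using this
  exact hX.unique hY

lemma ent_adjoint (X : H2 →L[ℂ] H2) (j k : ℤ) :
    ent (adjoint X) j k = starRingEnd ℂ (ent X k j) := by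
  rw [ent, ent, ← inner_conj_symm, adjoint_inner_left]

lemma ent_add (X Y : H2 →L[ℂ] H2) (j k : ℤ) : ent (X + Y) j k = ent X j k + ent Y j k := by
  simp [ent, inner_add_right]

lemma ent_sub (X Y : H2 →L[ℂ] H2) (j k : ℤ) : ent (X - Y) j k = ent X j k - ent Y j k := by
  simp [ent, inner_sub_right]

lemma delta_apply (m i : ℤ) : (delta m : H2) i = if i = m then 1 else 0 := by
  rw [delta, lp.single_apply]
  split <;> simp_all

lemma ent_one (j k : ℤ) : ent (1 : H2 →L[ℂ] H2) j k = if j = k then 1 else 0 := by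
  rw [ent_eq_coord]
  simp [delta_apply]

lemma apply_delta_of_ent {X : H2 →L[ℂ] H2} {g : ℤ → ℤ → ℂ} (h : ∀ j k, ent X j k = g j k)
    (k : ℤ) (v : H2) (hv : ∀ m, v m = g m k) : X (delta k) = v := by
  apply lp.ext; funext m; rw [← ent_eq_coord, h, hv]


set_option maxHeartbeats 2000000 in
/-- The induction step of the triangular-part identity:
`(J^{n+1})₊ = (Jⁿ)₊ J + (Jⁿ)_d J₊ - (J₊ Jⁿ)_d`, where `J₊ = aS`. -/
theorem stmt11 (a b : ℤ → ℝ) (ha : ∀ n, 0 < a n)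
    (S A Mb J : H2 →L[ℂ] H2)
    (hS : ∀ j k : ℤ, ent S j k = if k = j + 1 then 1 else 0)
    (hA : ∀ j k : ℤ, ent A j k = if j = k then (a j : ℂ) else 0)
    (hMb : ∀ j k : ℤ, ent Mb j k = if j = k then (b j : ℂ) else 0)
    (hJ : J = A * S + ContinuousLinearMap.adjoint S * A + Mb)
    (n : ℕ)
    (Up1 Upn Ddn Dcross : H2 →L[ℂ] H2)
    (hUp1 : ∀ j k : ℤ, ent Up1 j k = if j < k then ent (J ^ (n + 1)) j k else 0)
    (hUpn : ∀ j k : ℤ, ent Upn j k = if j < k then ent (J ^ n) j k else 0)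
    (hDdn : ∀ j k : ℤ, ent Ddn j k = if j = k then ent (J ^ n) j j else 0)
    (hDcross : ∀ j k : ℤ,
      ent Dcross j k = if j = k then ent (A * S * J ^ n) j j else 0) :
    Up1 = Upn * J + Ddn * (A * S) - Dcross := by
  -- actions on delta vectors
  have hSd : ∀ k, S (delta k) = delta (k - 1) := by
    intro k
    refine apply_delta_of_ent hS k _ fun m => ?_
    rw [delta_apply]
    congr 1
    simp only [eq_iff_iff]
    omega
  have hAd : ∀ k, A (delta k) = (a k : ℂ) • delta k := by
    intro k
    refine apply_delta_of_ent hA k _ fun m => ?_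
    rw [lp.coeFn_smul, Pi.smul_apply, delta_apply]
    split <;> simp_all
  have hMbd : ∀ k, Mb (delta k) = (b k : ℂ) • delta k := by
    intro k
    refine apply_delta_of_ent hMb k _ fun m => ?_
    rw [lp.coeFn_smul, Pi.smul_apply, delta_apply]
    split <;> simp_all
  have hSadj : ∀ j k : ℤ, ent (adjoint S) j k = if j = k + 1 then 1 else 0 := by
    intro j k
    rw [ent_adjoint, hS]
    split <;> simp
  have hSad : ∀ k, adjoint S (delta k) = delta (k + 1) := by
    intro k
    refine apply_delta_of_ent hSadj k _ fun m => ?_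
    rw [delta_apply]
  have hASd : ∀ k, (A * S) (delta k) = (a (k - 1) : ℂ) • delta (k - 1) := by
    intro k
    rw [ContinuousLinearMap.mul_apply, hSd, hAd]
  have hJd : ∀ k, J (delta k) =
      (a (k - 1) : ℂ) • delta (k - 1) + (b k : ℂ) • delta k + (a k : ℂ) • delta (k + 1) := by
    intro k
    rw [hJ]
    simp only [add_apply, ContinuousLinearMap.mul_apply, hSd, hAd, hMbd, map_smul, hSad]
    abel
  -- recurrence for right multiplication by J
  have hrec : ∀ (X : H2 →L[ℂ] H2) (j k : ℤ), ent (X * J) j k =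
      (a (k - 1) : ℂ) * ent X j (k - 1) + (b k : ℂ) * ent X j k
        + (a k : ℂ) * ent X j (k + 1) := by
    intro X j k
    rw [ent, ContinuousLinearMap.mul_apply, hJd]
    simp only [map_add, map_smul, inner_add_right, inner_smul_right]
    rfl
  -- self-adjointness of J
  have hAadj : adjoint A = A := by
    refine ext_of_ent fun j k => ?_
    rw [ent_adjoint, hA, hA]
    rcases eq_or_ne j k with h | h
    · subst h; simp
    · rw [if_neg (Ne.symm h), if_neg h, map_zero]
  have hMbadj : adjoint Mb = Mb := by
    refine ext_of_ent fun j k => ?_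
    rw [ent_adjoint, hMb, hMb]
    rcases eq_or_ne j k with h | h
    · subst h; simp
    · rw [if_neg (Ne.symm h), if_neg h, map_zero]
  have hJadj : adjoint J = J := by
    rw [hJ]
    simp only [map_add, mul_def, adjoint_comp, hAadj, hMbadj, adjoint_adjoint]
    abel
  have hJnadj : ∀ m : ℕ, adjoint (J ^ m) = J ^ m := by
    intro m
    have : IsSelfAdjoint J := by rw [IsSelfAdjoint, star_eq_adjoint, hJadj]
    have := this.pow m
    rwa [IsSelfAdjoint, star_eq_adjoint] at this
  -- entries of J^n are real
  have hreal : ∀ (m : ℕ) (j k : ℤ), starRingEnd ℂ (ent (J ^ m) j k) = ent (J ^ m) j k := by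
    intro m
    induction m with
    | zero => intro j k; rw [pow_zero, ent_one]; split <;> simp
    | succ m ih =>
      intro j k
      rw [pow_succ, hrec]
      simp only [map_add, map_mul, Complex.conj_ofReal, ih]
  -- symmetry of J^n
  have hsymm : ∀ j k : ℤ, ent (J ^ n) j k = ent (J ^ n) k j := by
    intro j k
    have := ent_adjoint (J ^ n) j k
    rw [hJnadj, hreal] at this
    exact this
  -- entry of the cross term on the diagonal
  have hcross : ∀ j : ℤ, ent (A * S * J ^ n) j j = (a j : ℂ) * ent (J ^ n) (j + 1) j := by
    intro j
    rw [ent, ContinuousLinearMap.mul_apply]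
    rw [show (A * S) ((J ^ n) (delta j)) = A (S ((J ^ n) (delta j))) from rfl]
    rw [← adjoint_inner_left A, hAadj, hAd, inner_smul_left, ← adjoint_inner_left S, hSad]
    rw [Complex.conj_ofReal, ent]
  -- entries of Ddn * (A*S)
  have hDAS : ∀ j k : ℤ, ent (Ddn * (A * S)) j k = (a (k - 1) : ℂ) * ent Ddn j (k - 1) := by
    intro j k
    rw [ent, ContinuousLinearMap.mul_apply, hASd, map_smul, inner_smul_right, ent]
  -- main computation
  refine ext_of_ent fun j k => ?_
  rw [hUp1, ent_sub, ent_add, hrec, hDAS, hDcross, hUpn, hUpn, hUpn, hDdn]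
  rw [pow_succ, hrec]
  rcases lt_trichotomy j k with hjk | hjk | hjk
  · rcases eq_or_ne j (k - 1) with h | h
    · subst h
      rw [if_pos hjk, if_neg (by omega : ¬ (k - 1 < k - 1)), if_pos hjk,
        if_pos (by omega : k - 1 < k + 1), if_pos rfl, if_neg (by omega : ¬ (k - 1 = k))]
      ring
    · rw [if_pos hjk, if_pos (by omega : j < k - 1), if_pos hjk,
        if_pos (by omega : j < k + 1), if_neg h, if_neg (by omega : ¬ (j = k))]
      ring
  · subst hjk
    rw [if_neg (by omega : ¬ (j < j)), if_neg (by omega : ¬ (j < j - 1)),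
      if_neg (by omega : ¬ (j < j)), if_pos (by omega : j < j + 1),
      if_neg (by omega : ¬ (j = j - 1)), if_pos rfl, hcross j, hsymm j (j + 1)]
    ring
  · rw [if_neg (by omega : ¬ (j < k)), if_neg (by omega : ¬ (j < k - 1)),
      if_neg (by omega : ¬ (j < k)), if_neg (by omega : ¬ (j < k + 1)),
      if_neg (by omega : ¬ (j = k - 1)), if_neg (by omega : ¬ (j = k))]
    ring
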